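/- For any set system L, if the induced quasi-order qo(L) is a well-quasi-order, then L has finite elasticity; moreover dim L ≤ otp(qo(L)). -/

import Mathlib

/-- A set system has finite elasticity if it has no infinite elasticity. -/
def FiniteElasticity {X : Type*} (𝓛 : Set (Set X)) : Prop :=
  ¬ ∃ (t : ℕ → X) (L : ℕ → Set X),
      (∀ i, L i ∈ 𝓛) ∧ (∀ i j, j ≤ i → t j ∈ L i) ∧ (∀ i, t (i + 1) ∉ L i)

/-- The quasi-order induced by a set system: `x ≼ y` iff every member of `𝓛`
containing `x` contains `y`. -/
def qoRel {X : Type*} (𝓛 : Set (Set X)) (x y : X) : Prop :=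
  ∀ L ∈ 𝓛, x ∈ L → y ∈ L

/-- A well-quasi-order: no infinite bad sequence. -/
def IsWqo {X : Type*} (r : X → X → Prop) : Prop :=
  ¬ ∃ t : ℕ → X, ∀ i j : ℕ, i < j → ¬ r (t i) (t j)

/-- The child relation of a tree of finite sequences: `a` is an immediate extension of `b`
lying in `T`.  The rank of the tree is the `Acc.rank` of the root `[]`. -/
def childRel {A : Type*} (T : Set (List A)) (a b : List A) : Prop :=
  a ∈ T ∧ ∃ x : A, a = b ++ [x]

/-- A (finite) bad sequence: `t i ⋠ t j` whenever `i < j`. -/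
def IsBadSeq {X : Type*} (r : X → X → Prop) (t : List X) : Prop :=
  t.Pairwise fun a b => ¬ r a b

/-- A production sequence `⟨(t₀, L₁), …, (t_{l-1}, L_l)⟩` of the set system `𝓛`:
each `Lᵢ ∈ 𝓛`, `{t₀, …, t_{i-1}} ⊆ Lᵢ`, and `tᵢ ∉ Lᵢ`. -/
def IsProdSeq {X : Type*} (𝓛 : Set (Set X)) (p : List (X × Set X)) : Prop :=
  (∀ (i : ℕ) (hi : i < p.length), (p.get ⟨i, hi⟩).2 ∈ 𝓛) ∧
  (∀ (i j : ℕ) (hi : i < p.length) (hj : j ≤ i),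
    (p.get ⟨j, by omega⟩).1 ∈ (p.get ⟨i, hi⟩).2) ∧
  (∀ (i : ℕ) (hi : i + 1 < p.length),
    (p.get ⟨i + 1, hi⟩).1 ∉ (p.get ⟨i, by omega⟩).2)


section AuxStmt14

/-- Rank inequality along a relation homomorphism. -/
theorem stmt14_rank_le_of_hom {α β : Type u} {r : α → α → Prop} {s : β → β → Prop} {f : α → β}
    (hf : ∀ x y, r x y → s (f x) (f y)) {a : α} (ha : Acc r a) :
    ∀ hb : Acc s (f a), ha.rank ≤ hb.rank := by
  induction ha with
  | intro a h ih =>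
    intro hb
    rw [Acc.rank_eq]
    apply Ordinal.iSup_le
    rintro ⟨b, hba⟩
    have hlt : (hb.inv (hf _ _ hba)).rank < hb.rank := Acc.rank_lt_of_rel hb (hf _ _ hba)
    have := ih b hba (hb.inv (hf _ _ hba))
    exact Order.succ_le_of_lt (lt_of_le_of_lt this hlt)

theorem stmt14_acc_pullback {α β : Type*} {r : α → α → Prop} {s : β → β → Prop} {f : α → β}
    (hf : ∀ x y, r x y → s (f x) (f y)) {a : α} (hb : Acc s (f a)) : Acc r a :=
  Subrelation.accessible (fun h => hf _ _ h) (InvImage.accessible f hb)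

/-- The tree of bad sequences of a wqo is well-founded at the root. -/
theorem stmt14_acc_bad {X : Type*} {r : X → X → Prop} (hwqo : IsWqo r) :
    Acc (childRel {t : List X | IsBadSeq r t}) [] := by
  set T := {t : List X | IsBadSeq r t} with hT
  by_contra hroot
  have step : ∀ l : {l : List X // ¬ Acc (childRel T) l},
      ∃ l' : {l : List X // ¬ Acc (childRel T) l}, childRel T l'.1 l.1 := by
    rintro ⟨l, hl⟩
    obtain ⟨b, hb, hrel⟩ := exists_not_acc_lt_of_not_acc hl
    exact ⟨⟨b, hb⟩, hrel⟩
  choose f hf using step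
  set g : ℕ → List X := fun n => (f^[n] ⟨[], hroot⟩).1 with hg
  have hstep : ∀ n, childRel T (g (n + 1)) (g n) := by
    intro n
    have h1 : f^[n + 1] ⟨[], hroot⟩ = f (f^[n] ⟨[], hroot⟩) :=
      Function.iterate_succ_apply' f n _
    rw [hg]
    simp only [h1]
    exact hf _
  choose x hxg using fun n => (hstep n).2
  have hrange : ∀ n, g n = (List.range n).map x := by
    intro n
    induction n with
    | zero => simp [hg]
    | succ n ihn => rw [hxg n, ihn, List.range_succ, List.map_append]; rfl
  refine hwqo ⟨x, fun i j hij hr => ?_⟩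
  have hbad : g (j + 1) ∈ T := (hstep j).1
  rw [hrange] at hbad
  have hpair : (List.range (j + 1)).Pairwise fun a b => ¬ r (x a) (x b) :=
    List.pairwise_map.mp hbad
  rw [List.pairwise_iff_getElem] at hpair
  have := hpair i j (by simpa using Nat.lt_succ_of_lt hij) (by simp) hij
  simp only [List.getElem_range] at this
  exact this hr

/-- A production sequence yields a bad sequence for the induced quasi-order. -/
theorem stmt14_prodseq_bad {X : Type*} {𝓛 : Set (Set X)} {p : List (X × Set X)}
    (hp : IsProdSeq 𝓛 p) : IsBadSeq (qoRel 𝓛) (p.map Prod.fst) := by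
  obtain ⟨h1, h2, h3⟩ := hp
  rw [IsBadSeq, List.pairwise_iff_getElem]
  intro i j hi hj hij hq
  simp only [List.length_map] at hi hj
  simp only [List.getElem_map] at hq
  obtain ⟨k, rfl⟩ : ∃ k, j = k + 1 := ⟨j - 1, by omega⟩
  have hmem : (p.get ⟨i, hi⟩).1 ∈ (p.get ⟨k, by omega⟩).2 := h2 k i (by omega) (by omega)
  have hnot : (p.get ⟨k + 1, hj⟩).1 ∉ (p.get ⟨k, by omega⟩).2 := h3 k hj
  have hL : (p.get ⟨k, by omega⟩ : X × Set X).2 ∈ 𝓛 := h1 k (by omega)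
  exact hnot (hq _ hL (by simpa [List.get_eq_getElem] using hmem))

theorem stmt14_hom {X : Type*} (𝓛 : Set (Set X)) :
    ∀ a b : List (X × Set X),
      childRel {p : List (X × Set X) | IsProdSeq 𝓛 p} a b →
      childRel {t : List X | IsBadSeq (qoRel 𝓛) t} (a.map Prod.fst) (b.map Prod.fst) := by
  rintro a b ⟨ha, y, rfl⟩
  exact ⟨stmt14_prodseq_bad ha, y.1, by simp⟩

end AuxStmt14

theorem stmt14 {X : Type*} (𝓛 : Set (Set X)) (hwqo : IsWqo (qoRel 𝓛)) :
    FiniteElasticity 𝓛 ∧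
    Acc (childRel {p : List (X × Set X) | IsProdSeq 𝓛 p}) [] ∧
    Acc (childRel {t : List X | IsBadSeq (qoRel 𝓛) t}) [] ∧
    ∀ (h₁ : Acc (childRel {p : List (X × Set X) | IsProdSeq 𝓛 p}) [])
      (h₂ : Acc (childRel {t : List X | IsBadSeq (qoRel 𝓛) t}) []),
      h₁.rank ≤ h₂.rank := by
  have hbadacc : Acc (childRel {t : List X | IsBadSeq (qoRel 𝓛) t}) [] := stmt14_acc_bad hwqo
  refine ⟨?_, ?_, hbadacc, ?_⟩
  · rintro ⟨t, L, h1, h2, h3⟩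
    refine hwqo ⟨t, fun i j hij hq => ?_⟩
    obtain ⟨k, rfl⟩ : ∃ k, j = k + 1 := ⟨j - 1, by omega⟩
    exact h3 k (hq (L k) (h1 k) (h2 k i (by omega)))
  · exact stmt14_acc_pullback (stmt14_hom 𝓛) (a := []) hbadacc
  · intro h₁ h₂
    exact stmt14_rank_le_of_hom (stmt14_hom 𝓛) h₁ h₂
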